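/- Suppose g = 0. Then a mixed stopping strategy p̂ is an equilibrium if and only if τ_p̂ is an optimal stopping time for the problem sup_τ E_x[f(X_τ)], i.e. E_x[f(X_{τ_p̂})] = sup_τ E_x[f(X_τ)] for every x ∈ E, where the supremum is over all stopping times τ of the filtration σ(X_0,…,X_n,Y_0,…,Y_n). -/

import Mathlib

/-!
Analytic model of the time-inconsistent stopping framework of Christensen & Lindensjö,
"Time-inconsistent stopping, myopic adjustment & equilibrium stability".

A time-homogeneous Markov chain `X` on a finite state space `E` is encoded by its
transition matrix `P` (`P x y = P_x(X_1 = y)`).  A mixed stopping strategy is a vector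
`p ∈ [0,1]^E`; the associated stopping time is `τ_p = min {n ≥ 0 : Y_n ≤ p_{X_n}}`,
where the `Y_n` are i.i.d. uniform randomization devices.  The quantity
`phi P p f x = E_x[f(X_{τ_p})]` (with the convention `f(X_{τ_p}) := lim_n f(X_n)` on
`{τ_p = ∞}`, the limit existing a.s. by absorption) is realized analytically, via
dominated convergence, as the limit in `n` of the finite-horizon values
`phiSeq P p f n x = E_x[f(X_{τ_p ∧ n})]`, which satisfy the one-step recursion given
by the Markov property.  Likewise `step P v x = E_x[v(X_1)]`.
-/

open Filter

variable {E : Type*}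

/-- One-step expectation operator: `step P v x = E_x[v(X_1)] = ∑ y, P x y * v y`. -/
noncomputable def step [Fintype E] (P : E → E → ℝ) (v : E → ℝ) (x : E) : ℝ :=
  ∑ y, P x y * v y

/-- Finite-horizon value `phiSeq P p f n x = E_x[f(X_{τ_p ∧ n})]`. -/
noncomputable def phiSeq [Fintype E] (P : E → E → ℝ) (p f : E → ℝ) : ℕ → E → ℝ
  | 0 => f
  | n + 1 => fun x => p x * f x + (1 - p x) * step P (phiSeq P p f n) x

/-- `phi P p f x = E_x[f(X_{τ_p})]`, with the convention `f(X_{τ_p}) := lim_n f(X_n)`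
on `{τ_p = ∞}`; by dominated convergence it is the limit of the finite-horizon values. -/
noncomputable def phi [Fintype E] (P : E → E → ℝ) (p f : E → ℝ) (x : E) : ℝ :=
  limUnder atTop fun n => phiSeq P p f n x

/-- `P` is a transition matrix (row-stochastic). -/
def IsTransition [Fintype E] (P : E → E → ℝ) : Prop :=
  (∀ x y, 0 ≤ P x y) ∧ ∀ x, ∑ y, P x y = 1

/-- `a` is an absorbing state of the chain. -/
def IsAbsorbingState (P : E → E → ℝ) (a : E) : Prop := P a a = 1

/-- The chain is absorbing: from each starting state, some absorbing state is reached
with positive probability in a finite number of steps. -/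
def IsAbsorbingChain [Fintype E] [DecidableEq E] (P : E → E → ℝ) : Prop :=
  ∀ x : E, ∃ (a : E) (n : ℕ), IsAbsorbingState P a ∧ 0 < ((Matrix.of P) ^ n) x a

/-- A mixed stopping strategy: a vector in `[0,1]^E`. -/
def IsStrategy (p : E → ℝ) : Prop := ∀ x, p x ∈ Set.Icc (0 : ℝ) 1

/-- `Kval P f h g p x q
      = q f(x) + (1-q) E_x[φ_p(X_1)] + g (q h(x) + (1-q) E_x[ψ_p(X_1)])`. -/
noncomputable def Kval [Fintype E] (P : E → E → ℝ) (f h : E → ℝ) (g : ℝ → ℝ)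
    (p : E → ℝ) (x : E) (q : ℝ) : ℝ :=
  q * f x + (1 - q) * step P (phi P p f) x
    + g (q * h x + (1 - q) * step P (phi P p h) x)

/-- `Jval P f h g p x = φ_p(x) + g(ψ_p(x)) = E_x[f(X_{τ_p})] + g(E_x[h(X_{τ_p})])`. -/
noncomputable def Jval [Fintype E] (P : E → E → ℝ) (f h : E → ℝ) (g : ℝ → ℝ)
    (p : E → ℝ) (x : E) : ℝ :=
  phi P p f x + g (phi P p h x)

/-- Subgame perfect Nash equilibrium (condition (EqI)). -/
def IsEquilibrium [Fintype E] (P : E → E → ℝ) (f h : E → ℝ) (g : ℝ → ℝ)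
    (p : E → ℝ) : Prop :=
  ∀ x : E, ∀ q ∈ Set.Icc (0 : ℝ) 1, Kval P f h g p x q ≤ Jval P f h g p x

/-- Finite-horizon optimal-stopping value:
`valueSeq P f n x = sup { E_x[f(X_τ)] : τ a stopping time with τ ≤ n }`. -/
noncomputable def valueSeq [Fintype E] (P : E → E → ℝ) (f : E → ℝ) : ℕ → E → ℝ
  | 0 => f
  | n + 1 => fun x => max (f x) (step P (valueSeq P f n) x)

/-- `optValue P f x = sup_τ E_x[f(X_τ)]`, the optimal stopping value over all stopping
times of the filtration `σ(X_0,…,X_n,Y_0,…,Y_n)` (with the limit convention on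
`{τ = ∞}`); for a finite absorbing chain it is the limit of the finite-horizon values. -/
noncomputable def optValue [Fintype E] (P : E → E → ℝ) (f : E → ℝ) (x : E) : ℝ :=
  limUnder atTop fun n => valueSeq P f n x


set_option linter.unusedSectionVars false

section A
variable [Fintype E] [DecidableEq E] (P : E → E → ℝ)

lemma step_mono (hP : IsTransition P) {v w : E → ℝ} (h : ∀ y, v y ≤ w y) (x : E) :
    step P v x ≤ step P w x :=
  Finset.sum_le_sum fun y _ => mul_le_mul_of_nonneg_left (h y) (hP.1 x y)

lemma step_const (hP : IsTransition P) (c : ℝ) (x : E) : step P (fun _ => c) x = c := by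
  simp only [step, ← Finset.sum_mul, hP.2 x, one_mul]

lemma step_le_of_le (hP : IsTransition P) {v : E → ℝ} {M : ℝ} (h : ∀ y, v y ≤ M) (x : E) :
    step P v x ≤ M := by
  have := step_mono P hP h x
  rwa [step_const P hP] at this

lemma le_step_of_le (hP : IsTransition P) {v : E → ℝ} {M : ℝ} (h : ∀ y, M ≤ v y) (x : E) :
    M ≤ step P v x := by
  have := step_mono P hP h x
  rwa [step_const P hP] at this

lemma abs_step_le (hP : IsTransition P) {v : E → ℝ} {M : ℝ} (h : ∀ y, |v y| ≤ M) (x : E) :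
    |step P v x| ≤ M := by
  rw [abs_le]
  constructor
  · exact le_step_of_le P hP (fun y => neg_le_of_abs_le (h y)) x
  · exact step_le_of_le P hP (fun y => le_of_abs_le (h y)) x

lemma row_absorbing (hP : IsTransition P) {a : E} (ha : IsAbsorbingState P a) {y : E}
    (hy : y ≠ a) : P a y = 0 := by
  by_contra hne
  have h1 : 0 < P a y := lt_of_le_of_ne (hP.1 a y) (Ne.symm hne)
  have h2 : ∑ z ∈ ({a, y} : Finset E), P a z ≤ ∑ z, P a z :=
    Finset.sum_le_sum_of_subset_of_nonneg (Finset.subset_univ _) (fun z _ _ => hP.1 a z)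
  rw [Finset.sum_pair (Ne.symm hy), ha, hP.2 a] at h2
  linarith

lemma step_absorbing (hP : IsTransition P) {a : E} (ha : IsAbsorbingState P a) (v : E → ℝ) :
    step P v a = v a := by
  rw [step, Finset.sum_eq_single a]
  · rw [ha, one_mul]
  · intro y _ hy; rw [row_absorbing P hP ha hy, zero_mul]
  · exact fun hmem => absurd (Finset.mem_univ a) hmem

end A

open Classical in
/-- indicator of non-absorbing (transient) states -/
noncomputable def trs (P : E → E → ℝ) (y : E) : ℝ :=
  if IsAbsorbingState P y then 0 else 1

/-- probability of being non-absorbed at time n -/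
noncomputable def rr [Fintype E] (P : E → E → ℝ) : ℕ → E → ℝ
  | 0 => trs P
  | n + 1 => step P (rr P n)

section B
variable [Fintype E] [DecidableEq E] (P : E → E → ℝ)

lemma trs_nonneg (y : E) : 0 ≤ trs P y := by unfold trs; split <;> norm_num
lemma trs_le_one (y : E) : trs P y ≤ 1 := by unfold trs; split <;> norm_num
lemma trs_absorbing {a : E} (ha : IsAbsorbingState P a) : trs P a = 0 := by simp [trs, ha]
lemma trs_of_not {y : E} (hy : ¬ IsAbsorbingState P y) : trs P y = 1 := by simp [trs, hy]

lemma rr_nonneg (hP : IsTransition P) : ∀ n x, 0 ≤ rr P n x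
  | 0, x => trs_nonneg P x
  | n + 1, x => le_step_of_le P hP (rr_nonneg hP n) x

lemma rr_le_one (hP : IsTransition P) : ∀ n x, rr P n x ≤ 1
  | 0, x => trs_le_one P x
  | n + 1, x => step_le_of_le P hP (rr_le_one hP n) x

lemma rr_absorbing (hP : IsTransition P) {a : E} (ha : IsAbsorbingState P a) :
    ∀ n, rr P n a = 0
  | 0 => trs_absorbing P ha
  | n + 1 => by
      show step P (rr P n) a = 0
      rw [step_absorbing P hP ha, rr_absorbing hP ha n]

lemma rr_antitone (hP : IsTransition P) : ∀ n x, rr P (n + 1) x ≤ rr P n x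
  | 0, x => by
      by_cases ha : IsAbsorbingState P x
      · rw [rr_absorbing P hP ha, rr_absorbing P hP ha]
      · calc rr P 1 x ≤ 1 := rr_le_one P hP 1 x
          _ = rr P 0 x := (trs_of_not P ha).symm
  | n + 1, x => step_mono P hP (fun y => rr_antitone hP n y) x

lemma rr_anti (hP : IsTransition P) (x : E) {m n : ℕ} (h : m ≤ n) : rr P n x ≤ rr P m x := by
  induction n with
  | zero => simp_all
  | succ k ih =>
      rcases Nat.lt_or_ge m (k+1) with hlt | hge
      · exact le_trans (rr_antitone P hP k x) (ih (Nat.lt_succ_iff.mp hlt))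
      · have : m = k + 1 := le_antisymm h hge
        rw [this]

lemma pow_apply_nonneg (hP : IsTransition P) : ∀ n x y, 0 ≤ ((Matrix.of P) ^ n) x y := by
  intro n
  induction n with
  | zero => intro x y; simp [Matrix.one_apply]; split <;> norm_num
  | succ k ih =>
      intro x y
      rw [pow_succ, Matrix.mul_apply]
      exact Finset.sum_nonneg fun z _ => mul_nonneg (ih x z) (hP.1 z y)

lemma pow_rowsum (hP : IsTransition P) : ∀ n x, ∑ y, ((Matrix.of P) ^ n) x y = 1 := by
  intro n
  induction n with
  | zero => intro x; simp [Matrix.one_apply]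
  | succ k ih =>
      intro x
      simp only [pow_succ, Matrix.mul_apply]
      rw [Finset.sum_comm]
      calc ∑ z, ∑ y, ((Matrix.of P) ^ k) x z * (Matrix.of P) z y
          = ∑ z, ((Matrix.of P) ^ k) x z * ∑ y, (Matrix.of P) z y := by
            simp [Finset.mul_sum]
        _ = 1 := by
            have : ∀ z, ∑ y, (Matrix.of P) z y = 1 := fun z => hP.2 z
            simp only [this, mul_one]; exact ih x

lemma rr_add (hP : IsTransition P) :
    ∀ m n x, rr P (m + n) x = ∑ y, ((Matrix.of P) ^ m) x y * rr P n y := by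
  intro m
  induction m with
  | zero =>
      intro n x
      simp only [Nat.zero_add, pow_zero, Matrix.one_apply, ite_mul, one_mul, zero_mul]
      rw [Finset.sum_ite_eq Finset.univ x (fun y => rr P n y)]
      simp
  | succ k ih =>
      intro n x
      have h1 : k + 1 + n = (k + n) + 1 := by omega
      rw [h1]
      show step P (rr P (k + n)) x = _
      unfold step
      calc ∑ z, P x z * rr P (k + n) z
          = ∑ z, P x z * ∑ y, ((Matrix.of P) ^ k) z y * rr P n y := by
            exact Finset.sum_congr rfl fun z _ => by rw [ih n z]
        _ = ∑ z, ∑ y, P x z * (((Matrix.of P) ^ k) z y * rr P n y) := by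
            simp [Finset.mul_sum]
        _ = ∑ y, (∑ z, P x z * ((Matrix.of P) ^ k) z y) * rr P n y := by
            rw [Finset.sum_comm]
            exact Finset.sum_congr rfl fun y _ => by rw [Finset.sum_mul]; exact Finset.sum_congr rfl fun z _ => by ring
        _ = ∑ y, ((Matrix.of P) ^ (k + 1)) x y * rr P n y := by
            refine Finset.sum_congr rfl fun y _ => ?_
            rw [pow_succ', Matrix.mul_apply]
            rfl

lemma rr_lt_one (hP : IsTransition P) {x a : E} {n : ℕ} (ha : IsAbsorbingState P a)
    (hpos : 0 < ((Matrix.of P) ^ n) x a) : rr P n x < 1 := by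
  have hr : rr P n x = ∑ y, ((Matrix.of P) ^ n) x y * rr P 0 y := by
    have := rr_add P hP n 0 x
    simpa using this
  have hb : rr P n x ≤ 1 - ((Matrix.of P) ^ n) x a := by
    rw [hr]
    have h1 : ∀ y, ((Matrix.of P) ^ n) x y * rr P 0 y
        ≤ ((Matrix.of P) ^ n) x y - (if y = a then ((Matrix.of P) ^ n) x y else 0) := by
      intro y
      by_cases hy : y = a
      · subst hy
        simp [show rr P 0 y = trs P y from rfl] at *
        rw [trs_absorbing P ha]
        simp
      · simp only [if_neg hy, sub_zero]
        calc ((Matrix.of P) ^ n) x y * rr P 0 y ≤ ((Matrix.of P) ^ n) x y * 1 :=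
              mul_le_mul_of_nonneg_left (rr_le_one P hP 0 y) (pow_apply_nonneg P hP n x y)
          _ = ((Matrix.of P) ^ n) x y := mul_one _
    calc ∑ y, ((Matrix.of P) ^ n) x y * rr P 0 y
        ≤ ∑ y, (((Matrix.of P) ^ n) x y - (if y = a then ((Matrix.of P) ^ n) x y else 0)) :=
          Finset.sum_le_sum fun y _ => h1 y
      _ = 1 - ((Matrix.of P) ^ n) x a := by
          rw [Finset.sum_sub_distrib, pow_rowsum P hP n x,
            Finset.sum_ite_eq' Finset.univ a (fun y => ((Matrix.of P) ^ n) x y)]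
          simp
  linarith

end B

section C
variable [Fintype E] [DecidableEq E] [Nonempty E] (P : E → E → ℝ)

lemma rr_tendsto_zero (hP : IsTransition P) (habs : IsAbsorbingChain P) (x : E) :
    Tendsto (fun n => rr P n x) atTop (nhds 0) := by
  classical
  -- horizon N such that rr P N y < 1 for every y
  have hN : ∀ y : E, ∃ n, rr P n y < 1 := by
    intro y
    obtain ⟨a, n, ha, hpos⟩ := habs y
    exact ⟨n, rr_lt_one P hP ha hpos⟩
  choose Nf hNf using hN
  set N : ℕ := 1 + Finset.univ.sup Nf with hNdef
  have hNpos : 0 < N := Nat.lt_of_lt_of_le Nat.zero_lt_one (Nat.le_add_right 1 _)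
  have hNy : ∀ y, rr P N y < 1 := by
    intro y
    have h1 : Nf y ≤ N := le_trans (Finset.le_sup (Finset.mem_univ y)) (Nat.le_add_left _ _)
    exact lt_of_le_of_lt (rr_anti P hP y h1) (hNf y)
  set c : ℝ := Finset.univ.sup' Finset.univ_nonempty (fun y => rr P N y) with hcdef
  have hc1 : c < 1 := by
    rw [hcdef]
    exact (Finset.sup'_lt_iff _).mpr fun y _ => hNy y
  have hc_ge : ∀ y, rr P N y ≤ c := fun y => Finset.le_sup' _ (Finset.mem_univ y)
  have hc0 : 0 ≤ c := le_trans (rr_nonneg P hP N (Classical.arbitrary E)) (hc_ge _)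
  -- contraction: rr (n + N) x ≤ c * rr n x
  have hcontr : ∀ n x, rr P (n + N) x ≤ c * rr P n x := by
    intro n x
    rw [rr_add P hP n N x]
    have h1 : ∀ y, ((Matrix.of P) ^ n) x y * rr P N y
        ≤ ((Matrix.of P) ^ n) x y * (c * rr P 0 y) := by
      intro y
      refine mul_le_mul_of_nonneg_left ?_ (pow_apply_nonneg P hP n x y)
      by_cases hy : IsAbsorbingState P y
      · rw [rr_absorbing P hP hy N, show rr P 0 y = trs P y from rfl, trs_absorbing P hy,
          mul_zero]
      · have : rr P 0 y = 1 := by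
          show trs P y = 1
          simp [trs, hy]
        rw [this, mul_one]
        exact hc_ge y
    calc ∑ y, ((Matrix.of P) ^ n) x y * rr P N y
        ≤ ∑ y, ((Matrix.of P) ^ n) x y * (c * rr P 0 y) := Finset.sum_le_sum fun y _ => h1 y
      _ = c * ∑ y, ((Matrix.of P) ^ n) x y * rr P 0 y := by
          rw [Finset.mul_sum]; exact Finset.sum_congr rfl fun y _ => by ring
      _ = c * rr P n x := by rw [← rr_add P hP n 0 x, Nat.add_zero]
  -- geometric bound
  have hgeo : ∀ k x, rr P (k * N) x ≤ c ^ k := by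
    intro k
    induction k with
    | zero => intro x; simpa using rr_le_one P hP 0 x
    | succ m ih =>
        intro x
        have h1 : (m + 1) * N = m * N + N := by ring
        rw [h1, pow_succ]
        calc rr P (m * N + N) x ≤ c * rr P (m * N) x := hcontr (m * N) x
          _ ≤ c * c ^ m := mul_le_mul_of_nonneg_left (ih x) hc0
          _ = c ^ m * c := mul_comm _ _
  have hbound : ∀ n, rr P n x ≤ c ^ (n / N) := by
    intro n
    calc rr P n x ≤ rr P ((n / N) * N) x := rr_anti P hP x (Nat.div_mul_le_self n N)
      _ ≤ c ^ (n / N) := hgeo (n / N) x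
  have hdiv : Tendsto (fun n : ℕ => n / N) atTop atTop := by
    refine tendsto_atTop_atTop.2 fun b => ⟨b * N, fun n hn => ?_⟩
    exact (Nat.le_div_iff_mul_le hNpos).2 hn
  have hpow : Tendsto (fun n : ℕ => c ^ (n / N)) atTop (nhds 0) :=
    (tendsto_pow_atTop_nhds_zero_of_lt_one hc0 hc1).comp hdiv
  exact squeeze_zero (fun n => rr_nonneg P hP n x) hbound hpow

end C

section D
variable [Fintype E] [DecidableEq E] (P : E → E → ℝ)

lemma abs_phiSeq_le (hP : IsTransition P) {p : E → ℝ} (hp : IsStrategy p) {f : E → ℝ}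
    {M : ℝ} (hM : ∀ y, |f y| ≤ M) : ∀ n x, |phiSeq P p f n x| ≤ M
  | 0, x => hM x
  | n + 1, x => by
      have h1 := (hp x).1
      have h2 := (hp x).2
      have hs := abs_step_le P hP (fun y => abs_phiSeq_le hP hp hM n y) x
      calc |p x * f x + (1 - p x) * step P (phiSeq P p f n) x|
          ≤ |p x * f x| + |(1 - p x) * step P (phiSeq P p f n) x| := abs_add_le _ _
        _ = p x * |f x| + (1 - p x) * |step P (phiSeq P p f n) x| := by
            rw [abs_mul, abs_mul, abs_of_nonneg h1,
              abs_of_nonneg (show (0:ℝ) ≤ 1 - p x by linarith)]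
        _ ≤ p x * M + (1 - p x) * M := by
            have := hM x
            gcongr <;> linarith
        _ = M := by ring

lemma phiSeq_absorbing (hP : IsTransition P) (p f : E → ℝ) {a : E}
    (ha : IsAbsorbingState P a) : ∀ n, phiSeq P p f n a = f a
  | 0 => rfl
  | n + 1 => by
      show p a * f a + (1 - p a) * step P (phiSeq P p f n) a = f a
      rw [step_absorbing P hP ha, phiSeq_absorbing hP p f ha n]
      ring

lemma phiSeq_diff_le (hP : IsTransition P) {p : E → ℝ} (hp : IsStrategy p) {f : E → ℝ}
    {M : ℝ} (hM : ∀ y, |f y| ≤ M) :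
    ∀ n k x, |phiSeq P p f (n + k) x - phiSeq P p f n x| ≤ 2 * M * rr P n x := by
  intro n
  induction n with
  | zero =>
      intro k x
      by_cases ha : IsAbsorbingState P x
      · rw [phiSeq_absorbing P hP p f ha, show phiSeq P p f 0 x = f x from rfl,
          sub_self, abs_zero, show rr P 0 x = trs P x from rfl, trs_absorbing P ha, mul_zero]
      · have h0 : rr P 0 x = 1 := by show trs P x = 1; simp [trs, ha]
        rw [h0, mul_one]
        calc |phiSeq P p f (0 + k) x - phiSeq P p f 0 x|
            ≤ |phiSeq P p f (0 + k) x| + |phiSeq P p f 0 x| := abs_sub _ _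
          _ ≤ M + M := add_le_add (abs_phiSeq_le P hP hp hM _ x) (abs_phiSeq_le P hP hp hM _ x)
          _ = 2 * M := by ring
  | succ m ih =>
      intro k x
      have h1 := (hp x).1
      have h2 := (hp x).2
      have key : phiSeq P p f (m + 1 + k) x - phiSeq P p f (m + 1) x
          = (1 - p x) * (step P (phiSeq P p f (m + k)) x - step P (phiSeq P p f m) x) := by
        have : m + 1 + k = (m + k) + 1 := by omega
        rw [this]
        show p x * f x + (1 - p x) * step P (phiSeq P p f (m + k)) x
            - (p x * f x + (1 - p x) * step P (phiSeq P p f m) x) = _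
        ring
      rw [key, abs_mul, abs_of_nonneg (by linarith : (0:ℝ) ≤ 1 - p x)]
      have hdiff : |step P (phiSeq P p f (m + k)) x - step P (phiSeq P p f m) x|
          ≤ 2 * M * rr P m.succ x := by
        have hexp : step P (phiSeq P p f (m + k)) x - step P (phiSeq P p f m) x
            = ∑ y, P x y * (phiSeq P p f (m + k) y - phiSeq P p f m y) := by
          unfold step
          rw [← Finset.sum_sub_distrib]
          exact Finset.sum_congr rfl fun y _ => by ring
        rw [hexp]
        calc |∑ y, P x y * (phiSeq P p f (m + k) y - phiSeq P p f m y)|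
            ≤ ∑ y, |P x y * (phiSeq P p f (m + k) y - phiSeq P p f m y)| :=
              Finset.abs_sum_le_sum_abs _ _
          _ ≤ ∑ y, P x y * (2 * M * rr P m y) := by
              refine Finset.sum_le_sum fun y _ => ?_
              rw [abs_mul, abs_of_nonneg (hP.1 x y)]
              exact mul_le_mul_of_nonneg_left (ih k y) (hP.1 x y)
          _ = 2 * M * step P (rr P m) x := by
              unfold step
              rw [Finset.mul_sum]
              exact Finset.sum_congr rfl fun y _ => by ring
          _ = 2 * M * rr P m.succ x := rfl
      calc (1 - p x) * |step P (phiSeq P p f (m + k)) x - step P (phiSeq P p f m) x|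
          ≤ 1 * (2 * M * rr P m.succ x) := by
            have hM0 : 0 ≤ M := le_trans (abs_nonneg _) (hM x)
            have hr0 : 0 ≤ rr P m.succ x := rr_nonneg P hP _ x
            have habs0 : 0 ≤ |step P (phiSeq P p f (m + k)) x - step P (phiSeq P p f m) x| :=
              abs_nonneg _
            nlinarith
        _ = 2 * M * rr P m.succ x := one_mul _

lemma tendsto_phiSeq [Nonempty E] (hP : IsTransition P) (habs : IsAbsorbingChain P)
    {p : E → ℝ} (hp : IsStrategy p) (f : E → ℝ) (x : E) :
    Tendsto (fun n => phiSeq P p f n x) atTop (nhds (phi P p f x)) := by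
  classical
  obtain ⟨M, hM⟩ : ∃ M : ℝ, ∀ y, |f y| ≤ M :=
    ⟨Finset.univ.sup' Finset.univ_nonempty (fun y => |f y|),
      fun y => Finset.le_sup' (fun y => |f y|) (Finset.mem_univ y)⟩
  have hcauchy : CauchySeq (fun n => phiSeq P p f n x) := by
    apply cauchySeq_of_le_tendsto_0 (fun N => 4 * M * rr P N x)
    · intro n m N hn hm
      have hbn : |phiSeq P p f n x - phiSeq P p f N x| ≤ 2 * M * rr P N x := by
        have : n = N + (n - N) := by omega
        rw [this]
        exact phiSeq_diff_le P hP hp hM N (n - N) x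
      have hbm : |phiSeq P p f m x - phiSeq P p f N x| ≤ 2 * M * rr P N x := by
        have : m = N + (m - N) := by omega
        rw [this]
        exact phiSeq_diff_le P hP hp hM N (m - N) x
      rw [Real.dist_eq]
      calc |phiSeq P p f n x - phiSeq P p f m x|
          ≤ |phiSeq P p f n x - phiSeq P p f N x| + |phiSeq P p f m x - phiSeq P p f N x| := by
            have := abs_sub_abs_le_abs_sub (phiSeq P p f n x) (phiSeq P p f m x)
            calc |phiSeq P p f n x - phiSeq P p f m x|
                = |(phiSeq P p f n x - phiSeq P p f N x) - (phiSeq P p f m x - phiSeq P p f N x)| := by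
                  ring_nf
              _ ≤ _ := abs_sub _ _
        _ ≤ 2 * M * rr P N x + 2 * M * rr P N x := add_le_add hbn hbm
        _ = 4 * M * rr P N x := by ring
    · have := rr_tendsto_zero P hP habs x
      have h4 : Tendsto (fun N => 4 * M * rr P N x) atTop (nhds (4 * M * 0)) :=
        this.const_mul (4 * M)
      simpa using h4
  obtain ⟨L, hL⟩ := cauchySeq_tendsto_of_complete hcauchy
  have : phi P p f x = L := hL.limUnder_eq
  rw [this]
  exact hL

lemma phi_fixed [Nonempty E] (hP : IsTransition P) (habs : IsAbsorbingChain P)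
    {p : E → ℝ} (hp : IsStrategy p) (f : E → ℝ) (x : E) :
    phi P p f x = p x * f x + (1 - p x) * step P (phi P p f) x := by
  have h1 : Tendsto (fun n => phiSeq P p f (n + 1) x) atTop (nhds (phi P p f x)) :=
    (tendsto_phiSeq P hP habs hp f x).comp (tendsto_add_atTop_nat 1)
  have hstep : Tendsto (fun n => step P (phiSeq P p f n) x) atTop
      (nhds (step P (phi P p f) x)) := by
    unfold step
    exact tendsto_finset_sum _ fun y _ =>
      (tendsto_phiSeq P hP habs hp f y).const_mul (P x y)
  have h2 : Tendsto (fun n => phiSeq P p f (n + 1) x) atTop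
      (nhds (p x * f x + (1 - p x) * step P (phi P p f) x)) := by
    have : (fun n => phiSeq P p f (n + 1) x)
        = fun n => p x * f x + (1 - p x) * step P (phiSeq P p f n) x := rfl
    rw [this]
    exact tendsto_const_nhds.add (hstep.const_mul _)
  exact tendsto_nhds_unique h1 h2

lemma valueSeq_mono (hP : IsTransition P) (f : E → ℝ) :
    ∀ n x, valueSeq P f n x ≤ valueSeq P f (n + 1) x
  | 0, x => le_max_left _ _
  | n + 1, x => max_le_max (le_refl _)
      (step_mono P hP (fun y => valueSeq_mono hP f n y) x)

lemma abs_valueSeq_le (hP : IsTransition P) {f : E → ℝ} {M : ℝ} (hM : ∀ y, |f y| ≤ M) :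
    ∀ n x, |valueSeq P f n x| ≤ M
  | 0, x => hM x
  | n + 1, x => by
      rw [abs_le]
      constructor
      · exact le_trans (neg_le_of_abs_le (hM x)) (le_max_left _ _)
      · exact max_le (le_of_abs_le (hM x))
          (step_le_of_le P hP (fun y => le_of_abs_le (abs_valueSeq_le hP hM n y)) x)

lemma tendsto_valueSeq [Nonempty E] (hP : IsTransition P) (f : E → ℝ) (x : E) :
    Tendsto (fun n => valueSeq P f n x) atTop (nhds (optValue P f x)) := by
  classical
  obtain ⟨M, hM⟩ : ∃ M : ℝ, ∀ y, |f y| ≤ M :=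
    ⟨Finset.univ.sup' Finset.univ_nonempty (fun y => |f y|),
      fun y => Finset.le_sup' (fun y => |f y|) (Finset.mem_univ y)⟩
  have hmono : Monotone (fun n => valueSeq P f n x) :=
    monotone_nat_of_le_succ fun n => valueSeq_mono P hP f n x
  have hbdd : BddAbove (Set.range fun n => valueSeq P f n x) := by
    refine ⟨M, ?_⟩
    rintro y ⟨n, rfl⟩
    exact le_of_abs_le (abs_valueSeq_le P hP hM n x)
  have hL := tendsto_atTop_ciSup hmono hbdd
  have : optValue P f x = ⨆ n, valueSeq P f n x := hL.limUnder_eq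
  rw [this]
  exact hL

lemma optValue_fixed [Nonempty E] (hP : IsTransition P) (f : E → ℝ) (x : E) :
    optValue P f x = max (f x) (step P (optValue P f) x) := by
  have h1 : Tendsto (fun n => valueSeq P f (n + 1) x) atTop (nhds (optValue P f x)) :=
    (tendsto_valueSeq P hP f x).comp (tendsto_add_atTop_nat 1)
  have hstep : Tendsto (fun n => step P (valueSeq P f n) x) atTop
      (nhds (step P (optValue P f) x)) := by
    unfold step
    exact tendsto_finset_sum _ fun y _ =>
      (tendsto_valueSeq P hP f y).const_mul (P x y)
  have h2 : Tendsto (fun n => valueSeq P f (n + 1) x) atTop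
      (nhds (max (f x) (step P (optValue P f) x))) := by
    have : (fun n => valueSeq P f (n + 1) x)
        = fun n => max (f x) (step P (valueSeq P f n) x) := rfl
    rw [this]
    exact tendsto_const_nhds.max hstep
  exact tendsto_nhds_unique h1 h2

lemma phiSeq_le_valueSeq (hP : IsTransition P) {p : E → ℝ} (hp : IsStrategy p) (f : E → ℝ) :
    ∀ n x, phiSeq P p f n x ≤ valueSeq P f n x
  | 0, x => le_refl _
  | n + 1, x => by
      have h1 := (hp x).1
      have h2 := (hp x).2
      have hf : f x ≤ valueSeq P f (n + 1) x := le_max_left _ _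
      have hs : step P (phiSeq P p f n) x ≤ valueSeq P f (n + 1) x :=
        le_trans (step_mono P hP (fun y => phiSeq_le_valueSeq hP hp f n y) x)
          (le_max_right _ _)
      show p x * f x + (1 - p x) * step P (phiSeq P p f n) x ≤ valueSeq P f (n + 1) x
      nlinarith

lemma valueSeq_le_of_superharmonic (hP : IsTransition P) {f w : E → ℝ}
    (hf : ∀ x, f x ≤ w x) (hs : ∀ x, step P w x ≤ w x) :
    ∀ n x, valueSeq P f n x ≤ w x
  | 0, x => hf x
  | n + 1, x => max_le (hf x)
      (le_trans (step_mono P hP (fun y => valueSeq_le_of_superharmonic hP hf hs n y) x) (hs x))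

end D

/-- Theorem 3.1 (the time-consistent case): if `g = 0`, a strategy is an equilibrium
iff its stopping time is optimal (in the usual sense) for `sup_τ E_x[f(X_τ)]`. -/
theorem equilibrium_iff_optimal_of_g_eq_zero [Fintype E] [DecidableEq E]
    (P : E → E → ℝ) (hP : IsTransition P) (habs : IsAbsorbingChain P)
    (f h : E → ℝ) (g : ℝ → ℝ) (hg0 : ∀ t, g t = 0)
    (phat : E → ℝ) (hphat : IsStrategy phat) :
    IsEquilibrium P f h g phat ↔ ∀ x : E, phi P phat f x = optValue P f x := by
  rcases isEmpty_or_nonempty E with hE | hE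
  · exact iff_of_true (fun x => (IsEmpty.false x).elim) (fun x => (IsEmpty.false x).elim)
  · constructor
    · intro hEq x
      have hf : ∀ z, f z ≤ phi P phat f z := by
        intro z
        have hz := hEq z 1 ⟨zero_le_one, le_refl 1⟩
        simpa [Kval, Jval, hg0] using hz
      have hsh : ∀ z, step P (phi P phat f) z ≤ phi P phat f z := by
        intro z
        have hz := hEq z 0 ⟨le_refl 0, zero_le_one⟩
        simpa [Kval, Jval, hg0] using hz
      refine le_antisymm ?_ ?_
      · exact le_of_tendsto_of_tendsto' (tendsto_phiSeq P hP habs hphat f x)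
          (tendsto_valueSeq P hP f x) (fun n => phiSeq_le_valueSeq P hP hphat f n x)
      · exact le_of_tendsto' (tendsto_valueSeq P hP f x)
          (fun n => valueSeq_le_of_superharmonic P hP hf hsh n x)
    · intro hopt x q hq
      have hfix := optValue_fixed P hP f x
      have hf : f x ≤ phi P phat f x := by
        rw [hopt x, hfix]; exact le_max_left _ _
      have hsx : step P (phi P phat f) x = step P (optValue P f) x := by
        unfold step; exact Finset.sum_congr rfl fun y _ => by rw [hopt y]
      have hs : step P (phi P phat f) x ≤ phi P phat f x := by
        rw [hsx, hopt x]
        conv_rhs => rw [hfix]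
        exact le_max_right _ _
      have hq0 := hq.1
      have hq1 := hq.2
      simp only [Kval, Jval, hg0, add_zero]
      nlinarith [hf, hs]
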